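/- Let U = ℝⁿ × (ℝⁿ \ {0}), let L : U → ℝ be smooth, let k ∈ ℝ with k ≠ 1, and suppose L is positively homogeneous of degree k in the fibre variable: L(x, λy) = λᵏ L(x,y) for all λ > 0 and all (x,y) ∈ U. Let G be a canonical semispray coefficient family for L on U and N^j_i = ∂Gʲ/∂yⁱ. Then the semispray derivative S(L) = Σ_j yʲ ∂L/∂xʲ − 2 Σ_j Gʲ ∂L/∂yʲ vanishes identically on U, and consequently the horizontal derivative vanishes: δL/δxⁱ = ∂L/∂xⁱ − Σ_j N^j_i ∂L/∂yʲ = 0 on U for all i (d_hL = 0). -/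

import Mathlib

open scoped ContDiff

/-- The tangent bundle of `ℝⁿ`, identified with `ℝⁿ × ℝⁿ` (base coordinates `x`,
fibre coordinates `y`). -/
abbrev TM (n : ℕ) := (Fin n → ℝ) × (Fin n → ℝ)

/-- Partial derivative of `F` in the `i`-th base coordinate `xⁱ`. -/
noncomputable def pdx {n : ℕ} (F : TM n → ℝ) (i : Fin n) (p : TM n) : ℝ :=
  fderiv ℝ F p (Pi.single i 1, 0)

/-- Partial derivative of `F` in the `i`-th fibre coordinate `yⁱ`. -/
noncomputable def pdy {n : ℕ} (F : TM n → ℝ) (i : Fin n) (p : TM n) : ℝ :=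
  fderiv ℝ F p (0, Pi.single i 1)

/-- The metric tensor `g_ij = ½ ∂²L/∂yⁱ∂yʲ` of a Lagrangian `L`. -/
noncomputable def gmetric {n : ℕ} (L : TM n → ℝ) (i j : Fin n) (p : TM n) : ℝ :=
  (1 / 2) * pdy (pdy L j) i p

/-- Canonical nonlinear connection coefficients `N^j_i = ∂Gʲ/∂yⁱ`. -/
noncomputable def Ncoef {n : ℕ} (G : TM n → Fin n → ℝ) (j i : Fin n) (p : TM n) : ℝ :=
  pdy (fun q => G q j) i p

/-- The semispray derivative `S(F) = Σ_j yʲ ∂F/∂xʲ − 2 Σ_j Gʲ ∂F/∂yʲ`. -/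
noncomputable def sprayDeriv {n : ℕ} (F : TM n → ℝ) (G : TM n → Fin n → ℝ) (p : TM n) : ℝ :=
  ∑ j, p.2 j * pdx F j p - 2 * ∑ j, G p j * pdy F j p

/-- The horizontal derivative `δL/δxⁱ = ∂L/∂xⁱ − Σ_j N^j_i ∂L/∂yʲ`, where
`N^j_i = ∂Gʲ/∂yⁱ` are the canonical nonlinear connection coefficients. -/
noncomputable def hderiv {n : ℕ} (L : TM n → ℝ) (G : TM n → Fin n → ℝ) (i : Fin n)
    (p : TM n) : ℝ :=
  pdx L i p - ∑ j, Ncoef G j i p * pdy L j p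

section Auxiliary

open Filter Topology

variable {n : ℕ}

def Uset (n : ℕ) : Set (TM n) := {p | p.2 ≠ 0}

lemma isOpen_U : IsOpen (Uset n) := isOpen_compl_singleton.preimage continuous_snd

lemma U_mem_nhds {p : TM n} (hp : p.2 ≠ 0) : Uset n ∈ 𝓝 p := isOpen_U.mem_nhds hp

lemma diffAt {E : Type*} [NormedAddCommGroup E] [NormedSpace ℝ E]
    {L : TM n → E} (hL : ContDiffOn ℝ ∞ L (Uset n)) {p : TM n} (hp : p.2 ≠ 0) :
    DifferentiableAt ℝ L p :=
  (hL.contDiffAt (U_mem_nhds hp)).differentiableAt (by simp)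

lemma fderiv_smooth {L : TM n → ℝ} (hL : ContDiffOn ℝ ∞ L (Uset n)) :
    ContDiffOn ℝ ∞ (fderiv ℝ L) (Uset n) :=
  hL.fderiv_of_isOpen isOpen_U (le_of_eq rfl)

lemma pdx_smooth {L : TM n → ℝ} (hL : ContDiffOn ℝ ∞ L (Uset n)) (i : Fin n) :
    ContDiffOn ℝ ∞ (pdx L i) (Uset n) :=
  (fderiv_smooth hL).clm_apply contDiffOn_const

lemma pdy_smooth {L : TM n → ℝ} (hL : ContDiffOn ℝ ∞ L (Uset n)) (i : Fin n) :
    ContDiffOn ℝ ∞ (pdy L i) (Uset n) :=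
  (fderiv_smooth hL).clm_apply contDiffOn_const

lemma y_decomp (y : Fin n → ℝ) :
    ((0, y) : TM n) = ∑ j, y j • (((0 : Fin n → ℝ), (Pi.single j 1 : Fin n → ℝ)) : TM n) := by
  rw [Prod.ext_iff]
  refine ⟨by simp [Prod.fst_sum], ?_⟩
  simp only [Prod.snd_sum, Prod.smul_mk, smul_zero]
  ext x
  simp [Pi.single_apply]

lemma clm_y_expand (Φ : TM n →L[ℝ] ℝ) (y : Fin n → ℝ) :
    Φ (0, y) = ∑ j, y j * Φ (0, Pi.single j 1) := by
  rw [y_decomp y, map_sum]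
  refine Finset.sum_congr rfl fun j _ => ?_
  calc Φ (y j • (((0 : Fin n → ℝ), (Pi.single j 1 : Fin n → ℝ)) : TM n))
      = y j * Φ (0, Pi.single j 1) := by rw [map_smul]; rfl

/-- Euler's theorem for positively homogeneous functions on `U`. -/
lemma euler {F : TM n → ℝ} {m : ℝ}
    (hdiff : ∀ p : TM n, p.2 ≠ 0 → DifferentiableAt ℝ F p)
    (hhom : ∀ lam : ℝ, 0 < lam → ∀ p : TM n, p.2 ≠ 0 →
      F (p.1, lam • p.2) = lam ^ m * F p)
    {p : TM n} (hp : p.2 ≠ 0) :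
    ∑ j, p.2 j * pdy F j p = m * F p := by
  have hc : HasDerivAt (fun lam : ℝ => ((p.1, lam • p.2) : TM n)) ((0 : Fin n → ℝ), p.2) 1 := by
    have h1 : HasDerivAt (fun _ : ℝ => p.1) (0 : Fin n → ℝ) 1 := hasDerivAt_const _ _
    have h2 : HasDerivAt (fun lam : ℝ => lam • p.2) p.2 1 := by
      simpa using (hasDerivAt_id (1:ℝ)).smul_const p.2
    exact h1.prodMk h2
  have hF : HasFDerivAt F (fderiv ℝ F p) p := (hdiff p hp).hasFDerivAt
  have hcomp : HasDerivAt (fun lam : ℝ => F (p.1, lam • p.2)) (fderiv ℝ F p (0, p.2)) 1 := by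
    have hF' : HasFDerivAt F (fderiv ℝ F p) (p.1, (1:ℝ) • p.2) := by
      rw [one_smul]; exact hF
    exact hF'.comp_hasDerivAt (1:ℝ) hc
  have hrpow : HasDerivAt (fun lam : ℝ => lam ^ m * F p) (m * F p) 1 := by
    have := (Real.hasDerivAt_rpow_const (x := (1:ℝ)) (p := m) (Or.inl one_ne_zero)).mul_const (F p)
    simpa using this
  have heq : (fun lam : ℝ => F (p.1, lam • p.2)) =ᶠ[𝓝 (1:ℝ)] fun lam => lam ^ m * F p := by
    filter_upwards [eventually_gt_nhds (by norm_num : (0:ℝ) < 1)] with lam hlam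
    exact hhom lam hlam p hp
  have h2 : HasDerivAt (fun lam : ℝ => F (p.1, lam • p.2)) (m * F p) 1 :=
    hrpow.congr_of_eventuallyEq heq
  have hval : fderiv ℝ F p (0, p.2) = m * F p := hcomp.unique h2
  rw [← hval, clm_y_expand]
  rfl

noncomputable def Tclm (n : ℕ) (lam : ℝ) : TM n →L[ℝ] TM n :=
  (ContinuousLinearMap.fst ℝ _ _).prod (lam • ContinuousLinearMap.snd ℝ _ _)

lemma Tclm_apply (lam : ℝ) (q : TM n) : Tclm n lam q = (q.1, lam • q.2) := rfl

lemma fderiv_hom {L : TM n → ℝ} {k : ℝ}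
    (hdiff : ∀ p : TM n, p.2 ≠ 0 → DifferentiableAt ℝ L p)
    (hhom : ∀ lam : ℝ, 0 < lam → ∀ p : TM n, p.2 ≠ 0 →
      L (p.1, lam • p.2) = lam ^ k * L p)
    {lam : ℝ} (hlam : 0 < lam) {p : TM n} (hp : p.2 ≠ 0) (v : TM n) :
    fderiv ℝ L (p.1, lam • p.2) (v.1, lam • v.2) = lam ^ k * fderiv ℝ L p v := by
  have hTp : ((p.1, lam • p.2) : TM n).2 ≠ 0 := smul_ne_zero (ne_of_gt hlam) hp
  have hFT : HasFDerivAt L (fderiv ℝ L (p.1, lam • p.2)) (p.1, lam • p.2) :=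
    (hdiff _ hTp).hasFDerivAt
  have hcomp : HasFDerivAt (fun q => L (Tclm n lam q))
      ((fderiv ℝ L (p.1, lam • p.2)).comp (Tclm n lam)) p :=
    hFT.comp p ((Tclm n lam).hasFDerivAt (x := p))
  have hg : HasFDerivAt (fun q => lam ^ k * L q) (lam ^ k • fderiv ℝ L p) p :=
    (hdiff p hp).hasFDerivAt.const_mul _
  have heq : (fun q => L (Tclm n lam q)) =ᶠ[𝓝 p] fun q => lam ^ k * L q := by
    filter_upwards [U_mem_nhds hp] with q hq
    exact hhom lam hlam q hq
  have h2 : HasFDerivAt (fun q => L (Tclm n lam q)) (lam ^ k • fderiv ℝ L p) p :=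
    hg.congr_of_eventuallyEq heq
  have huniq := hcomp.unique h2
  have := congrArg (fun (Φ : TM n →L[ℝ] ℝ) => Φ v) huniq
  simpa [Tclm_apply] using this

lemma pdx_hom {L : TM n → ℝ} {k : ℝ}
    (hdiff : ∀ p : TM n, p.2 ≠ 0 → DifferentiableAt ℝ L p)
    (hhom : ∀ lam : ℝ, 0 < lam → ∀ p : TM n, p.2 ≠ 0 →
      L (p.1, lam • p.2) = lam ^ k * L p)
    (i : Fin n) (lam : ℝ) (hlam : 0 < lam) (p : TM n) (hp : p.2 ≠ 0) :
    pdx L i (p.1, lam • p.2) = lam ^ k * pdx L i p := by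
  have := fderiv_hom hdiff hhom hlam hp ((Pi.single i 1 : Fin n → ℝ), (0 : Fin n → ℝ))
  simpa [pdx] using this

lemma pdy_hom {L : TM n → ℝ} {k : ℝ}
    (hdiff : ∀ p : TM n, p.2 ≠ 0 → DifferentiableAt ℝ L p)
    (hhom : ∀ lam : ℝ, 0 < lam → ∀ p : TM n, p.2 ≠ 0 →
      L (p.1, lam • p.2) = lam ^ k * L p)
    (j : Fin n) (lam : ℝ) (hlam : 0 < lam) (p : TM n) (hp : p.2 ≠ 0) :
    pdy L j (p.1, lam • p.2) = lam ^ (k - 1) * pdy L j p := by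
  have h := fderiv_hom hdiff hhom hlam hp ((0 : Fin n → ℝ), (Pi.single j 1 : Fin n → ℝ))
  have hsm : fderiv ℝ L (p.1, lam • p.2) ((0 : Fin n → ℝ), lam • (Pi.single j 1 : Fin n → ℝ))
      = lam * pdy L j (p.1, lam • p.2) := by
    have hv : (((0 : Fin n → ℝ), lam • (Pi.single j 1 : Fin n → ℝ)) : TM n)
        = lam • (((0 : Fin n → ℝ), (Pi.single j 1 : Fin n → ℝ)) : TM n) := by
      rw [Prod.smul_mk, smul_zero]
    rw [hv, map_smul]
    rfl
  rw [hsm] at h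
  have hlam0 : lam ≠ 0 := ne_of_gt hlam
  field_simp [pdy] at h ⊢
  rw [Real.rpow_sub hlam, Real.rpow_one]
  field_simp
  simp only [pdy] at h ⊢
  linarith [h]

lemma hasFDerivAt_fderiv_apply {L : TM n → ℝ} (hL : ContDiffOn ℝ ∞ L (Uset n))
    {p : TM n} (hp : p.2 ≠ 0) (v : TM n) :
    HasFDerivAt (fun q => fderiv ℝ L q v)
      ((ContinuousLinearMap.apply ℝ ℝ v).comp (fderiv ℝ (fderiv ℝ L) p)) p := by
  have hx : HasFDerivAt (fderiv ℝ L) (fderiv ℝ (fderiv ℝ L) p) p :=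
    (diffAt (fderiv_smooth hL) hp).hasFDerivAt
  exact (ContinuousLinearMap.apply ℝ ℝ v).hasFDerivAt.comp p hx

lemma fderiv_fderiv_apply {L : TM n → ℝ} (hL : ContDiffOn ℝ ∞ L (Uset n))
    {p : TM n} (hp : p.2 ≠ 0) (v w : TM n) :
    fderiv ℝ (fun q => fderiv ℝ L q v) p w = fderiv ℝ (fderiv ℝ L) p w v := by
  rw [(hasFDerivAt_fderiv_apply hL hp v).fderiv]
  rfl

lemma second_symm {L : TM n → ℝ} (hL : ContDiffOn ℝ ∞ L (Uset n))
    {p : TM n} (hp : p.2 ≠ 0) (v w : TM n) :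
    fderiv ℝ (fderiv ℝ L) p v w = fderiv ℝ (fderiv ℝ L) p w v := by
  have hf : ∀ᶠ q in 𝓝 p, HasFDerivAt L (fderiv ℝ L q) q := by
    filter_upwards [U_mem_nhds hp] with q hq
    exact (diffAt hL hq).hasFDerivAt
  have hx : HasFDerivAt (fderiv ℝ L) (fderiv ℝ (fderiv ℝ L) p) p :=
    (diffAt (fderiv_smooth hL) hp).hasFDerivAt
  exact second_derivative_symmetric_of_eventually hf hx v w

/-- Schwarz: `∂/∂xʰ ∂/∂yⁱ L = ∂/∂yⁱ ∂/∂xʰ L` on `U`. -/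
lemma schwarz {L : TM n → ℝ} (hL : ContDiffOn ℝ ∞ L (Uset n))
    {p : TM n} (hp : p.2 ≠ 0) (i h : Fin n) :
    pdx (pdy L i) h p = pdy (pdx L h) i p := by
  show fderiv ℝ (fun q => fderiv ℝ L q (0, Pi.single i 1)) p (Pi.single h 1, 0)
      = fderiv ℝ (fun q => fderiv ℝ L q (Pi.single h 1, 0)) p (0, Pi.single i 1)
  rw [fderiv_fderiv_apply hL hp, fderiv_fderiv_apply hL hp, second_symm hL hp]

end Auxiliary

/-- if `L` is positively homogeneous of degree `k ≠ 1` in the fibre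
variable on `U = ℝⁿ × (ℝⁿ \\ {0})`, and `G` is a canonical semispray coefficient
family for `L` on `U`, then `S(L) = 0` on `U` and consequently `d_hL = 0` on `U`. -/
theorem homogeneous_lagrangian_is_conservation_law (n : ℕ) (L : TM n → ℝ) (k : ℝ)
    (hk : k ≠ 1)
    (hL : ContDiffOn ℝ ∞ L {p : TM n | p.2 ≠ 0})
    (hhom : ∀ lam : ℝ, 0 < lam → ∀ p : TM n, p.2 ≠ 0 →
      L (p.1, lam • p.2) = lam ^ k * L p)
    (G : TM n → Fin n → ℝ) (hGsmooth : ContDiffOn ℝ ∞ G {p : TM n | p.2 ≠ 0})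
    (hG : ∀ p : TM n, p.2 ≠ 0 → ∀ i : Fin n,
      4 * ∑ l, gmetric L i l p * G p l = ∑ h, p.2 h * pdx (pdy L i) h p - pdx L i p) :
    (∀ p : TM n, p.2 ≠ 0 → sprayDeriv L G p = 0) ∧
    (∀ p : TM n, p.2 ≠ 0 → ∀ i : Fin n, hderiv L G i p = 0) := by
  have hLU : ContDiffOn ℝ ∞ L (Uset n) := hL
  have hGU : ContDiffOn ℝ ∞ G (Uset n) := hGsmooth
  have hdiffL : ∀ p : TM n, p.2 ≠ 0 → DifferentiableAt ℝ L p := fun p hp => diffAt hLU hp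
  -- Euler for ∂L/∂xʰ (degree k)
  have E2 : ∀ (p : TM n), p.2 ≠ 0 → ∀ h : Fin n,
      ∑ i, p.2 i * pdy (pdx L h) i p = k * pdx L h p := by
    intro p hp h
    exact euler (fun q hq => diffAt (pdx_smooth hLU h) hq)
      (fun lam hlam q hq => pdx_hom hdiffL hhom h lam hlam q hq) hp
  -- Euler for ∂L/∂yˡ (degree k - 1)
  have E3 : ∀ (p : TM n), p.2 ≠ 0 → ∀ l : Fin n,
      ∑ i, p.2 i * pdy (pdy L l) i p = (k - 1) * pdy L l p := by
    intro p hp l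
    exact euler (fun q hq => diffAt (pdy_smooth hLU l) hq)
      (fun lam hlam q hq => pdy_hom hdiffL hhom l lam hlam q hq) hp
  -- Part 1: S(L) = 0 on U
  have part1 : ∀ p : TM n, p.2 ≠ 0 → sprayDeriv L G p = 0 := by
    intro p hp
    have hAB : ∑ i, p.2 i * (4 * ∑ l, gmetric L i l p * G p l)
        = ∑ i, p.2 i * (∑ h, p.2 h * pdx (pdy L i) h p - pdx L i p) :=
      Finset.sum_congr rfl fun i _ => by rw [hG p hp i]
    have hLHS : ∑ i, p.2 i * (4 * ∑ l, gmetric L i l p * G p l)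
        = 2 * (k - 1) * ∑ l, G p l * pdy L l p := by
      have h1 : ∀ l, ∑ i, p.2 i * gmetric L i l p = 1/2 * ((k - 1) * pdy L l p) := by
        intro l
        calc ∑ i, p.2 i * gmetric L i l p
            = 1/2 * ∑ i, p.2 i * pdy (pdy L l) i p := by
              rw [Finset.mul_sum]
              exact Finset.sum_congr rfl fun i _ => by rw [gmetric]; ring
          _ = 1/2 * ((k - 1) * pdy L l p) := by rw [E3 p hp l]
      calc ∑ i, p.2 i * (4 * ∑ l, gmetric L i l p * G p l)
          = ∑ i, ∑ l, (4 * G p l) * (p.2 i * gmetric L i l p) := by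
            refine Finset.sum_congr rfl fun i _ => ?_
            rw [Finset.mul_sum, Finset.mul_sum]
            exact Finset.sum_congr rfl fun l _ => by ring
        _ = ∑ l, ∑ i, (4 * G p l) * (p.2 i * gmetric L i l p) := Finset.sum_comm
        _ = ∑ l, (4 * G p l) * (1/2 * ((k - 1) * pdy L l p)) := by
            refine Finset.sum_congr rfl fun l _ => ?_
            rw [← Finset.mul_sum, h1 l]
        _ = 2 * (k - 1) * ∑ l, G p l * pdy L l p := by
            rw [Finset.mul_sum]
            exact Finset.sum_congr rfl fun l _ => by ring
    have hRHS : ∑ i, p.2 i * (∑ h, p.2 h * pdx (pdy L i) h p - pdx L i p)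
        = (k - 1) * ∑ h, p.2 h * pdx L h p := by
      have h2 : ∑ i, p.2 i * ∑ h, p.2 h * pdx (pdy L i) h p
          = k * ∑ h, p.2 h * pdx L h p := by
        calc ∑ i, p.2 i * ∑ h, p.2 h * pdx (pdy L i) h p
            = ∑ i, ∑ h, p.2 h * (p.2 i * pdy (pdx L h) i p) := by
              refine Finset.sum_congr rfl fun i _ => ?_
              rw [Finset.mul_sum]
              exact Finset.sum_congr rfl fun h _ => by rw [schwarz hLU hp i h]; ring
          _ = ∑ h, ∑ i, p.2 h * (p.2 i * pdy (pdx L h) i p) := Finset.sum_comm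
          _ = ∑ h, p.2 h * (k * pdx L h p) := by
              refine Finset.sum_congr rfl fun h _ => ?_
              rw [← Finset.mul_sum, E2 p hp h]
          _ = k * ∑ h, p.2 h * pdx L h p := by
              rw [Finset.mul_sum]
              exact Finset.sum_congr rfl fun h _ => by ring
      calc ∑ i, p.2 i * (∑ h, p.2 h * pdx (pdy L i) h p - pdx L i p)
          = (∑ i, p.2 i * ∑ h, p.2 h * pdx (pdy L i) h p) - ∑ i, p.2 i * pdx L i p := by
            rw [← Finset.sum_sub_distrib]
            exact Finset.sum_congr rfl fun i _ => by ring
        _ = (k - 1) * ∑ h, p.2 h * pdx L h p := by rw [h2]; ring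
    rw [hLHS, hRHS] at hAB
    have hk1 : k - 1 ≠ 0 := sub_ne_zero.mpr hk
    have hcancel : 2 * ∑ l, G p l * pdy L l p = ∑ h, p.2 h * pdx L h p := by
      have h' : (k - 1) * (2 * ∑ l, G p l * pdy L l p)
          = (k - 1) * ∑ h, p.2 h * pdx L h p := by linear_combination hAB
      exact mul_left_cancel₀ hk1 h'
    rw [sprayDeriv, ← hcancel]
    ring
  refine ⟨part1, ?_⟩
  -- Part 2: d_h L = 0 on U
  intro p hp i
  -- the derivative of S(L) in direction (0, eᵢ) vanishes
  have hspray0 : fderiv ℝ (sprayDeriv L G) p = 0 := by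
    have heq : sprayDeriv L G =ᶠ[nhds p] fun _ => (0:ℝ) := by
      filter_upwards [U_mem_nhds hp] with q hq
      exact part1 q hq
    rw [heq.fderiv_eq, fderiv_fun_const]
    rfl
  -- compute the derivative of S(L) by hand
  set w : TM n := ((0 : Fin n → ℝ), (Pi.single i 1 : Fin n → ℝ)) with hw
  have coordy : ∀ j : Fin n, HasFDerivAt (fun q : TM n => q.2 j)
      ((ContinuousLinearMap.proj j).comp (ContinuousLinearMap.snd ℝ _ _)) p :=
    fun j => by
      exact ((ContinuousLinearMap.proj (R := ℝ) (φ := fun _ : Fin n => ℝ) j).comp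
        (ContinuousLinearMap.snd ℝ (Fin n → ℝ) (Fin n → ℝ))).hasFDerivAt
  have hpdx : ∀ j, HasFDerivAt (pdx L j) (fderiv ℝ (pdx L j) p) p :=
    fun j => (diffAt (pdx_smooth hLU j) hp).hasFDerivAt
  have hpdy : ∀ j, HasFDerivAt (pdy L j) (fderiv ℝ (pdy L j) p) p :=
    fun j => (diffAt (pdy_smooth hLU j) hp).hasFDerivAt
  have hGj : ∀ j, HasFDerivAt (fun q => G q j) (fderiv ℝ (fun q => G q j) p) p := by
    intro j
    have : ContDiffOn ℝ ∞ (fun q => G q j) (Uset n) :=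
      (ContinuousLinearMap.proj (R := ℝ) (φ := fun _ : Fin n => ℝ) j).contDiff.comp_contDiffOn hGU
    exact (diffAt this hp).hasFDerivAt
  have hterm1 : HasFDerivAt (fun q : TM n => ∑ j, q.2 j * pdx L j q)
      (∑ j, (p.2 j • fderiv ℝ (pdx L j) p + pdx L j p •
        ((ContinuousLinearMap.proj j).comp (ContinuousLinearMap.snd ℝ _ _)))) p :=
    HasFDerivAt.fun_sum fun j _ => (coordy j).mul (hpdx j)
  have hterm2 : HasFDerivAt (fun q : TM n => 2 * ∑ j, G q j * pdy L j q)
      ((2:ℝ) • ∑ j, (G p j • fderiv ℝ (pdy L j) p + pdy L j p • fderiv ℝ (fun q => G q j) p)) p :=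
    (HasFDerivAt.fun_sum fun j _ => (hGj j).mul (hpdy j)).const_mul 2
  have hΦ : HasFDerivAt (sprayDeriv L G)
      ((∑ j, (p.2 j • fderiv ℝ (pdx L j) p + pdx L j p •
        ((ContinuousLinearMap.proj j).comp (ContinuousLinearMap.snd ℝ _ _))))
       - (2:ℝ) • ∑ j, (G p j • fderiv ℝ (pdy L j) p + pdy L j p • fderiv ℝ (fun q => G q j) p)) p :=
    hterm1.sub hterm2
  have hval := congrArg (fun (Φ : TM n →L[ℝ] ℝ) => Φ w) (hΦ.fderiv.symm.trans hspray0)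
  simp only [ContinuousLinearMap.sub_apply, ContinuousLinearMap.sum_apply,
    ContinuousLinearMap.add_apply, ContinuousLinearMap.smul_apply, smul_eq_mul,
    ContinuousLinearMap.coe_comp', Function.comp_apply, ContinuousLinearMap.coe_snd',
    ContinuousLinearMap.proj_apply, ContinuousLinearMap.zero_apply] at hval
  -- identify the pieces
  have hfd1 : ∀ j, fderiv ℝ (pdx L j) p w = pdy (pdx L j) i p := fun j => rfl
  have hfd2 : ∀ j, fderiv ℝ (pdy L j) p w = pdy (pdy L j) i p := fun j => rfl
  have hfd3 : ∀ j, fderiv ℝ (fun q => G q j) p w = Ncoef G j i p := fun j => rfl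
  simp only [hfd1, hfd2, hfd3] at hval
  have hsingle : ∑ x : Fin n, pdx L x p * (Pi.single i (1:ℝ) : Fin n → ℝ) x = pdx L i p := by
    simp [Pi.single_apply, mul_ite]
  rw [Finset.sum_add_distrib, Finset.sum_add_distrib, hsingle] at hval
  -- use the semispray equation to conclude
  have hGi := hG p hp i
  have hGi' : 2 * ∑ j, G p j * pdy (pdy L j) i p
      = (∑ j, p.2 j * pdy (pdx L j) i p) - pdx L i p := by
    have hl : 4 * ∑ l, gmetric L i l p * G p l = 2 * ∑ j, G p j * pdy (pdy L j) i p := by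
      rw [Finset.mul_sum, Finset.mul_sum]
      exact Finset.sum_congr rfl fun l _ => by rw [gmetric]; ring
    have hr : ∑ h, p.2 h * pdx (pdy L i) h p = ∑ j, p.2 j * pdy (pdx L j) i p :=
      Finset.sum_congr rfl fun h _ => by rw [schwarz hLU hp i h]
    rw [← hl, hGi, hr]
  rw [hderiv]
  have hN : ∑ j, Ncoef G j i p * pdy L j p = ∑ j, pdy L j p * Ncoef G j i p :=
    Finset.sum_congr rfl fun j _ => mul_comm _ _
  rw [hN]
  linarith [hval, hGi']
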